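/- For any points p, q ∈ ℝ² and any real c ≥ 0, the set {x ∈ ℝ² : dist(x, q) + c ≤ dist(x, p)} is convex. (This is the region bounded by one branch of the hyperbola with foci p and q, on the side of the focus q.) -/
import Mathlib

open scoped RealInnerProductSpace

/-- The set of points at least as close to `q` as to `w` is convex (it's a half-space). -/
lemma convex_dist_le_dist (q w : EuclideanSpace ℝ (Fin 2)) :
    Convex ℝ {x : EuclideanSpace ℝ (Fin 2) | dist x q ≤ dist x w} := by
  have hset : {x : EuclideanSpace ℝ (Fin 2) | dist x q ≤ dist x w}
      = {x : EuclideanSpace ℝ (Fin 2) |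
          (2 : ℝ) * ⟪x, w - q⟫ ≤ ‖w‖ ^ 2 - ‖q‖ ^ 2} := by
    ext x
    simp only [Set.mem_setOf_eq, dist_eq_norm]
    rw [← Real.sqrt_sq (norm_nonneg (x - q)), ← Real.sqrt_sq (norm_nonneg (x - w)),
      Real.sqrt_le_sqrt_iff (by positivity)]
    rw [← real_inner_self_eq_norm_sq, ← real_inner_self_eq_norm_sq]
    simp only [inner_sub_left, inner_sub_right, real_inner_comm x q, real_inner_comm x w,
      ← real_inner_self_eq_norm_sq]
    ring_nf
    constructor <;> intro h <;> nlinarith [h]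
  rw [hset]
  exact convex_halfSpace_le
    (IsLinearMap.mk (fun a b => by rw [inner_add_left]; ring)
      (fun c a => by rw [real_inner_smul_left, smul_eq_mul]; ring)) _

theorem hyperbola_branch_side_convex (p q : EuclideanSpace ℝ (Fin 2)) (c : ℝ) (hc : 0 ≤ c) :
    Convex ℝ {x : EuclideanSpace ℝ (Fin 2) | dist x q + c ≤ dist x p} := by
  rcases lt_trichotomy c (dist p q) with hlt | heq | hgt
  · -- main case: c < dist p q; the set is an intersection of half-planes
    have hset : {x : EuclideanSpace ℝ (Fin 2) | dist x q + c ≤ dist x p}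
        = ⋂ w ∈ Metric.sphere p c,
            {x : EuclideanSpace ℝ (Fin 2) | dist x q ≤ dist x w} := by
      ext x
      simp only [Set.mem_setOf_eq, Set.mem_iInter, Metric.mem_sphere]
      constructor
      · intro hx w hw
        have : dist x p ≤ dist x w + dist w p := dist_triangle x w p
        linarith
      · intro hx
        by_cases hxp : x = p
        · exfalso
          obtain ⟨w, hw⟩ : (Metric.sphere p c).Nonempty :=
            NormedSpace.sphere_nonempty.mpr hc
          have h1 := hx w hw
          rw [Metric.mem_sphere, dist_comm] at hw
          rw [hxp] at h1
          rw [hw] at h1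
          linarith
        · set d := dist x p with hd
          have hdpos : 0 < d := dist_pos.mpr hxp
          set w := p + (c / d) • (x - p) with hwdef
          have hnxp : ‖x - p‖ = d := by rw [hd, dist_eq_norm]
          have hwp : dist w p = c := by
            rw [hwdef, dist_eq_norm, add_sub_cancel_left, norm_smul, Real.norm_eq_abs,
              abs_of_nonneg (by positivity), hnxp]
            field_simp
          have hxw : dist x w = |d - c| := by
            rw [hwdef, dist_eq_norm,
              show x - (p + (c / d) • (x - p)) = (1 - c / d) • (x - p) by module,
              norm_smul, Real.norm_eq_abs, hnxp]
            rw [show (1 : ℝ) - c / d = (d - c) / d by field_simp, abs_div,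
              abs_of_nonneg hdpos.le]
            field_simp
          have hkey := hx w hwp
          rw [hxw] at hkey
          rcases le_or_gt c d with h | h
          · rw [abs_of_nonneg (by linarith)] at hkey; linarith
          · rw [abs_of_neg (by linarith)] at hkey
            have htri : dist p q ≤ dist x p + dist x q := by
              rw [dist_comm x p]; exact dist_triangle p x q
            linarith
    rw [hset]
    exact convex_iInter₂ fun w _ => convex_dist_le_dist q w
  · -- case c = dist p q : the set is {x | Wbtw ℝ x q p}, a ray
    have hset : {x : EuclideanSpace ℝ (Fin 2) | dist x q + c ≤ dist x p}
        = {x : EuclideanSpace ℝ (Fin 2) | q ∈ segment ℝ x p} := by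
      ext x
      simp only [Set.mem_setOf_eq, mem_segment_iff_wbtw, ← dist_add_dist_eq_iff]
      have ht : dist x p ≤ dist x q + dist q p := dist_triangle x q p
      have h2 : dist q p = c := by rw [dist_comm, ← heq]
      constructor
      · intro h; linarith
      · intro h; linarith
    rw [hset]
    intro x₁ hx₁ x₂ hx₂ a b ha hb hab
    simp only [Set.mem_setOf_eq, segment_eq_image] at hx₁ hx₂ ⊢
    obtain ⟨s, hs, hsq⟩ := hx₁
    obtain ⟨t, ht, htq⟩ := hx₂
    rcases eq_or_lt_of_le hs.2 with h1 | h1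
    · -- s = 1 : q = p
      refine ⟨1, by norm_num, ?_⟩
      rw [h1] at hsq
      simp only at hsq
      rw [one_smul, sub_self, zero_smul, zero_add] at hsq
      simp only
      rw [one_smul, sub_self, zero_smul, zero_add]
      exact hsq
    rcases eq_or_lt_of_le ht.2 with h2 | h2
    · refine ⟨1, by norm_num, ?_⟩
      rw [h2] at htq
      simp only at htq
      rw [one_smul, sub_self, zero_smul, zero_add] at htq
      simp only
      rw [one_smul, sub_self, zero_smul, zero_add]
      exact htq
    · -- s, t < 1 : q - p = (1-s)(x₁ - p) = (1-t)(x₂ - p)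
      have e1 : q - p = (1 - s) • (x₁ - p) := by
        rw [← hsq]; simp only; module
      have e2 : q - p = (1 - t) • (x₂ - p) := by
        rw [← htq]; simp only; module
      have hs1 : 0 < 1 - s := by linarith
      have ht1 : 0 < 1 - t := by linarith
      have hr1 : 1 ≤ a / (1 - s) + b / (1 - t) := by
        have h1' : a ≤ a / (1 - s) := by
          rw [le_div_iff₀ hs1]; nlinarith [hs.1]
        have h2' : b ≤ b / (1 - t) := by
          rw [le_div_iff₀ ht1]; nlinarith [ht.1]
        linarith
      have hrpos : (0 : ℝ) < a / (1 - s) + b / (1 - t) := by linarith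
      have hinv : 1 / (a / (1 - s) + b / (1 - t)) ≤ 1 := by
        rw [div_le_one hrpos]; exact hr1
      have hinvpos : 0 < 1 / (a / (1 - s) + b / (1 - t)) := by positivity
      refine ⟨1 - 1 / (a / (1 - s) + b / (1 - t)), ⟨by linarith, by linarith⟩, ?_⟩
      have hz : (a • x₁ + b • x₂) - p = (a / (1 - s) + b / (1 - t)) • (q - p) := by
        have hzp : (a • x₁ + b • x₂) - p
            = a • (x₁ - p) + b • (x₂ - p) + (a + b - 1) • p := by module
        rw [hab, sub_self, zero_smul, add_zero] at hzp
        rw [hzp, add_smul]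
        nth_rewrite 2 [e2]
        rw [e1, smul_smul, smul_smul]
        rw [show a / (1 - s) * (1 - s) = a by field_simp,
          show b / (1 - t) * (1 - t) = b by field_simp]
      have hq : (1 / (a / (1 - s) + b / (1 - t))) • ((a • x₁ + b • x₂) - p) = q - p := by
        rw [hz, smul_smul, one_div, inv_mul_cancel₀ (ne_of_gt hrpos), one_smul]
      simp only
      linear_combination (norm := module) hq
  · -- case dist p q < c : the set is empty
    have hset : {x : EuclideanSpace ℝ (Fin 2) | dist x q + c ≤ dist x p} = ∅ := by
      ext x
      simp only [Set.mem_setOf_eq, Set.mem_empty_iff_false, iff_false, not_le]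
      have : dist x p ≤ dist x q + dist q p := dist_triangle x q p
      rw [dist_comm q p] at this
      linarith
    rw [hset]
    exact convex_empty
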